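/- Let G be a graph and fix a vertex P ∈ V(G). For every n, k ∈ ℕ, the number of elements of the rank Weierstrass set H_r(P) lying in the interval [1, nk] is at least k times the number of elements of H_r(P) lying in [1, n], i.e., |H_r(P) ∩ [1, nk]| ≥ k · |H_r(P) ∩ [1, n]|. -/
import Mathlib


open scoped Classical

/-- A graph: a finite connected multigraph with no loop edges, given by a symmetric
edge-multiplicity function on a finite nonempty vertex type. -/
structure Multigraph where
  V : Type
  [fintypeV : Fintype V]
  [decEqV : DecidableEq V]
  [nonemptyV : Nonempty V]
  adj : V → V → ℕ
  adj_symm : ∀ u v, adj u v = adj v u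
  adj_loopless : ∀ v, adj v v = 0
  conn : ∀ u v, Relation.ReflTransGen (fun a b => adj a b ≠ 0) u v

attribute [instance] Multigraph.fintypeV Multigraph.decEqV Multigraph.nonemptyV

namespace Multigraph

variable (G : Multigraph)

/-- A simple graph: no multiple edges and more than one vertex. -/
def Simple : Prop :=
  (∀ u v, G.adj u v ≤ 1) ∧ 1 < Fintype.card G.V

/-- The degree of a divisor. -/
def deg (D : G.V → ℤ) : ℤ := ∑ v, D v

/-- A divisor is effective if all its coefficients are nonnegative. -/
def Effective (D : G.V → ℤ) : Prop := ∀ v, 0 ≤ D v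

/-- The Laplacian of an integer-valued function on the vertices. -/
def lap (f : G.V → ℤ) : G.V → ℤ := fun v => ∑ w, (G.adj v w : ℤ) * (f v - f w)

/-- The linear system `|D|` is nonempty, i.e. `D` is linearly equivalent to an
effective divisor. -/
def LinNonempty (D : G.V → ℤ) : Prop :=
  ∃ f : G.V → ℤ, G.Effective (D - G.lap f)

/-- The Baker–Norine rank of a divisor: `-1` if `|D| = ∅`, otherwise the maximal
`k` such that `|D - E| ≠ ∅` for every effective divisor `E` of degree `k`. -/
noncomputable def rank (D : G.V → ℤ) : ℤ :=
  if G.LinNonempty D then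
    ((sSup {k : ℕ | ∀ E : G.V → ℤ, G.Effective E → G.deg E = (k : ℤ) →
        G.LinNonempty (D - E)} : ℕ) : ℤ)
  else -1

/-- The divisor `n • P`. -/
def pt (P : G.V) (n : ℤ) : G.V → ℤ := fun v => if v = P then n else 0

/-- The rank Weierstrass set of `G` at `P`. -/
def Hr (P : G.V) : Set ℕ :=
  {n : ℕ | G.rank (G.pt P ((n : ℤ) - 1)) < G.rank (G.pt P (n : ℤ))}

/-- The functional Weierstrass set of `G` at `P`: pole orders at `P` of functions
with a unique pole at `P`. -/
def Hf (P : G.V) : Set ℕ :=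
  {n : ℕ | ∃ f : G.V → ℤ, G.lap f P = -(n : ℤ) ∧ ∀ Q, Q ≠ P → 0 ≤ G.lap f Q}

/-- The number of edges joining `Q` to vertices outside `A`. -/
def outdeg (A : Finset G.V) (Q : G.V) : ℕ := ∑ R ∈ Aᶜ, G.adj Q R

/-- A divisor is `P`-reduced. -/
def Reduced (P : G.V) (D : G.V → ℤ) : Prop :=
  (∀ Q, Q ≠ P → 0 ≤ D Q) ∧
  ∀ A : Finset G.V, A.Nonempty → P ∉ A → ∃ Q ∈ A, D Q < (G.outdeg A Q : ℤ)

/-- `G` is the graph `B_n` with two vertices joined by `n` parallel edges. -/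
def IsBanana (n : ℕ) : Prop :=
  Fintype.card G.V = 2 ∧ ∀ u v, u ≠ v → G.adj u v = n

/-- `G` is the complete graph on `n` vertices. -/
def IsComplete (n : ℕ) : Prop :=
  Fintype.card G.V = n ∧ ∀ u v, u ≠ v → G.adj u v = 1

/-- `G` is the complete bipartite graph with parts `A` (of size `m`) and its
complement (of size `n`). -/
def IsCompleteBipartite (A : Finset G.V) (m n : ℕ) : Prop :=
  A.card = m ∧ Aᶜ.card = n ∧
  ∀ u v, G.adj u v = if (u ∈ A ∧ v ∉ A) ∨ (u ∉ A ∧ v ∈ A) then 1 else 0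

/-- `λ_Q(k)`: the least `n` with `r(nQ) = k`. -/
noncomputable def lam (Q : G.V) (k : ℕ) : ℕ :=
  sInf {n : ℕ | G.rank (G.pt Q (n : ℤ)) = (k : ℤ)}

end Multigraph

/-- `G` is the vertex gluing of `G₁` and `G₂` identifying `P₁` and `P₂` into `P`. -/
def IsVertexGluing (G G₁ G₂ : Multigraph) (P : G.V) (P₁ : G₁.V) (P₂ : G₂.V) : Prop :=
  ∃ (ι₁ : G₁.V → G.V) (ι₂ : G₂.V → G.V),
    Function.Injective ι₁ ∧ Function.Injective ι₂ ∧
    ι₁ P₁ = P ∧ ι₂ P₂ = P ∧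
    (∀ a b, ι₁ a = ι₂ b → ι₁ a = P) ∧
    (∀ v : G.V, (∃ a, ι₁ a = v) ∨ (∃ b, ι₂ b = v)) ∧
    (∀ a b, G.adj (ι₁ a) (ι₁ b) = G₁.adj a b) ∧
    (∀ a b, G.adj (ι₂ a) (ι₂ b) = G₂.adj a b) ∧
    (∀ a b, ι₁ a ≠ P → ι₂ b ≠ P → G.adj (ι₁ a) (ι₂ b) = 0)

namespace Multigraph

variable (G : Multigraph)

lemma deg_sub' (D E : G.V → ℤ) : G.deg (D - E) = G.deg D - G.deg E := by
  simp [deg, Finset.sum_sub_distrib]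

lemma deg_add' (D E : G.V → ℤ) : G.deg (D + E) = G.deg D + G.deg E := by
  simp [deg, Finset.sum_add_distrib]

lemma deg_lap (f : G.V → ℤ) : G.deg (G.lap f) = 0 := by
  unfold deg lap
  have h : ∀ v w : G.V, (G.adj v w : ℤ) * (f v - f w)
      = (G.adj v w : ℤ) * f v - (G.adj v w : ℤ) * f w := fun v w => mul_sub _ _ _
  simp_rw [h, Finset.sum_sub_distrib]
  rw [sub_eq_zero, Finset.sum_comm]
  refine Finset.sum_congr rfl fun v _ => Finset.sum_congr rfl fun w _ => ?_
  rw [G.adj_symm]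

lemma lap_add (f g : G.V → ℤ) : G.lap (f + g) = G.lap f + G.lap g := by
  funext v
  simp only [lap, Pi.add_apply, ← Finset.sum_add_distrib]
  exact Finset.sum_congr rfl fun w _ => by ring

lemma effective_add {D E : G.V → ℤ} (hD : G.Effective D) (hE : G.Effective E) :
    G.Effective (D + E) := fun v => add_nonneg (hD v) (hE v)

lemma linNonempty_of_effective {D : G.V → ℤ} (h : G.Effective D) : G.LinNonempty D :=
  ⟨0, fun v => by simpa [lap] using h v⟩

lemma deg_nonneg_of_linNonempty {D : G.V → ℤ} (h : G.LinNonempty D) : 0 ≤ G.deg D := by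
  obtain ⟨f, hf⟩ := h
  have h1 : 0 ≤ G.deg (D - G.lap f) := Finset.sum_nonneg fun v _ => hf v
  rwa [G.deg_sub', G.deg_lap, sub_zero] at h1

lemma deg_pt (P : G.V) (m : ℤ) : G.deg (G.pt P m) = m := by
  simp [deg, pt]

lemma effective_pt (P : G.V) {m : ℤ} (hm : 0 ≤ m) : G.Effective (G.pt P m) := by
  intro v
  unfold pt
  split_ifs <;> simp [hm]

lemma pt_add (P : G.V) (a b : ℤ) : G.pt P (a + b) = G.pt P a + G.pt P b := by
  funext v
  simp only [pt, Pi.add_apply]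
  split_ifs <;> simp

/-- The set appearing in the definition of `rank`. -/
def SS (D : G.V → ℤ) : Set ℕ :=
  {k : ℕ | ∀ E : G.V → ℤ, G.Effective E → G.deg E = (k : ℤ) → G.LinNonempty (D - E)}

lemma rank_eq (D : G.V → ℤ) :
    G.rank D = if G.LinNonempty D then ((sSup (G.SS D) : ℕ) : ℤ) else -1 := rfl

lemma SS_le {D : G.V → ℤ} {k : ℕ} (hk : k ∈ G.SS D) : (k : ℤ) ≤ G.deg D := by
  obtain ⟨Q⟩ := (inferInstance : Nonempty G.V)
  have h := hk (G.pt Q k) (G.effective_pt Q (by positivity)) (G.deg_pt Q k)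
  have h2 := G.deg_nonneg_of_linNonempty h
  rw [G.deg_sub', G.deg_pt] at h2
  linarith

lemma SS_bddAbove (D : G.V → ℤ) : BddAbove (G.SS D) := by
  refine ⟨(G.deg D).toNat, fun k hk => ?_⟩
  have := G.SS_le hk
  omega

lemma SS_zero_mem {D : G.V → ℤ} (h : G.LinNonempty D) : 0 ∈ G.SS D := by
  intro E hE hdeg
  have hd : ∑ v, E v = 0 := by simpa [deg] using hdeg
  have hE0 : ∀ v, E v = 0 := fun v =>
    (Finset.sum_eq_zero_iff_of_nonneg (fun v _ => hE v)).mp hd v (Finset.mem_univ v)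
  have hDE : D - E = D := by funext v; simp [hE0 v]
  rwa [hDE]

lemma SS_mem_of_succ {D : G.V → ℤ} {k : ℕ} (h : (k + 1) ∈ G.SS D) : k ∈ G.SS D := by
  intro E hE hdeg
  obtain ⟨Q⟩ := (inferInstance : Nonempty G.V)
  have hE' : G.Effective (E + G.pt Q 1) :=
    G.effective_add hE (G.effective_pt Q zero_le_one)
  have hd' : G.deg (E + G.pt Q 1) = ((k + 1 : ℕ) : ℤ) := by
    rw [G.deg_add', G.deg_pt, hdeg]; push_cast; ring
  obtain ⟨f, hf⟩ := h _ hE' hd'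
  refine ⟨f, fun v => ?_⟩
  have h1 := hf v
  have h2 : 0 ≤ G.pt Q 1 v := G.effective_pt Q zero_le_one v
  simp only [Pi.sub_apply, Pi.add_apply] at h1 ⊢
  linarith

lemma SS_mem_of_le {D : G.V → ℤ} {k m : ℕ} (hkm : k ≤ m) (h : m ∈ G.SS D) : k ∈ G.SS D := by
  induction m with
  | zero => simpa [Nat.le_zero.mp hkm] using h
  | succ m ih =>
    rcases Nat.eq_or_lt_of_le hkm with rfl | hlt
    · exact h
    · exact ih (Nat.lt_succ_iff.mp hlt) (G.SS_mem_of_succ h)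

lemma split_effective (a b : ℕ) : ∀ F : G.V → ℤ, G.Effective F → G.deg F = ((a + b : ℕ) : ℤ) →
    ∃ F1 F2 : G.V → ℤ, G.Effective F1 ∧ G.Effective F2 ∧ F = F1 + F2 ∧
      G.deg F1 = (a : ℤ) ∧ G.deg F2 = (b : ℤ) := by
  induction a with
  | zero =>
    intro F hF hd
    exact ⟨0, F, fun v => le_refl 0, hF, by funext v; simp, by simp [deg],
      by simpa using hd⟩
  | succ a ih =>
    intro F hF hd
    have hpos : 0 < G.deg F := by rw [hd]; push_cast; positivity
    have hQ : ∃ Q, 0 < F Q := by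
      by_contra hc
      push_neg at hc
      have : G.deg F ≤ 0 := Finset.sum_nonpos fun v _ => hc v
      omega
    obtain ⟨Q, hQ⟩ := hQ
    have hF' : G.Effective (F - G.pt Q 1) := by
      intro v
      simp only [Pi.sub_apply, pt]
      split_ifs with hv
      · subst hv; omega
      · simpa using hF v
    have hd' : G.deg (F - G.pt Q 1) = ((a + b : ℕ) : ℤ) := by
      rw [G.deg_sub', G.deg_pt, hd]; push_cast; ring
    obtain ⟨F1, F2, h1, h2, heq, hd1, hd2⟩ := ih (F - G.pt Q 1) hF' hd'
    refine ⟨F1 + G.pt Q 1, F2, G.effective_add h1 (G.effective_pt Q zero_le_one), h2, ?_, ?_, hd2⟩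
    · have : F = (F - G.pt Q 1) + G.pt Q 1 := by ring
      rw [this, heq]; ring
    · rw [G.deg_add', G.deg_pt, hd1]; push_cast; ring

lemma linNonempty_add {D D' : G.V → ℤ} (hD : G.LinNonempty D) (hD' : G.LinNonempty D') :
    G.LinNonempty (D + D') := by
  obtain ⟨f, hf⟩ := hD
  obtain ⟨g, hg⟩ := hD'
  refine ⟨f + g, fun v => ?_⟩
  have h1 := hf v
  have h2 := hg v
  simp only [lap_add, Pi.sub_apply, Pi.add_apply] at h1 h2 ⊢
  linarith

lemma rank_nonneg {D : G.V → ℤ} (hD : G.LinNonempty D) : 0 ≤ G.rank D := by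
  rw [rank_eq, if_pos hD]; positivity

lemma rank_superadd {D D' : G.V → ℤ} (hD : G.LinNonempty D) (hD' : G.LinNonempty D') :
    G.rank D + G.rank D' ≤ G.rank (D + D') := by
  have hDD' : G.LinNonempty (D + D') := G.linNonempty_add hD hD'
  have ha : sSup (G.SS D) ∈ G.SS D :=
    Nat.sSup_mem ⟨0, G.SS_zero_mem hD⟩ (G.SS_bddAbove D)
  have hb : sSup (G.SS D') ∈ G.SS D' :=
    Nat.sSup_mem ⟨0, G.SS_zero_mem hD'⟩ (G.SS_bddAbove D')
  have hab : sSup (G.SS D) + sSup (G.SS D') ∈ G.SS (D + D') := by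
    intro F hF hdF
    obtain ⟨F1, F2, h1, h2, heq, hd1, hd2⟩ :=
      G.split_effective (sSup (G.SS D)) (sSup (G.SS D')) F hF hdF
    obtain ⟨f, hf⟩ := ha F1 h1 hd1
    obtain ⟨g, hg⟩ := hb F2 h2 hd2
    refine ⟨f + g, fun v => ?_⟩
    have hv1 := hf v
    have hv2 := hg v
    simp only [lap_add, heq, Pi.sub_apply, Pi.add_apply] at hv1 hv2 ⊢
    linarith
  have hle : sSup (G.SS D) + sSup (G.SS D') ≤ sSup (G.SS (D + D')) :=
    le_csSup (G.SS_bddAbove _) hab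
  rw [rank_eq, rank_eq, rank_eq, if_pos hD, if_pos hD', if_pos hDD']
  exact_mod_cast hle

lemma rank_mono {D E : G.V → ℤ} (hD : G.LinNonempty D) (hE : G.Effective E) :
    G.rank D ≤ G.rank (D + E) := by
  have hDE : G.LinNonempty (D + E) :=
    G.linNonempty_add hD (G.linNonempty_of_effective hE)
  have hsub : G.SS D ⊆ G.SS (D + E) := by
    intro kk hk F hF hdF
    obtain ⟨f, hf⟩ := hk F hF hdF
    refine ⟨f, fun v => ?_⟩
    have h1 := hf v
    have h2 := hE v
    simp only [Pi.sub_apply, Pi.add_apply] at h1 ⊢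
    linarith
  rw [rank_eq, rank_eq, if_pos hD, if_pos hDE]
  exact_mod_cast csSup_le_csSup (G.SS_bddAbove _) ⟨0, G.SS_zero_mem hD⟩ hsub

lemma rank_step (Q : G.V) {D : G.V → ℤ} (hD : G.LinNonempty D) :
    G.rank (D + G.pt Q 1) ≤ G.rank D + 1 := by
  have hDE : G.LinNonempty (D + G.pt Q 1) :=
    G.linNonempty_add hD (G.linNonempty_of_effective (G.effective_pt Q zero_le_one))
  have hkey : sSup (G.SS (D + G.pt Q 1)) ≤ sSup (G.SS D) + 1 := by
    refine csSup_le ⟨0, G.SS_zero_mem hDE⟩ fun a ha => ?_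
    rcases Nat.eq_zero_or_pos a with rfl | hpos
    · omega
    · obtain ⟨c, rfl⟩ := Nat.exists_eq_add_of_le hpos
      have hc : c ∈ G.SS D := by
        intro F hF hdF
        have hF' : G.Effective (F + G.pt Q 1) :=
          G.effective_add hF (G.effective_pt Q zero_le_one)
        have hd' : G.deg (F + G.pt Q 1) = ((1 + c : ℕ) : ℤ) := by
          rw [G.deg_add', G.deg_pt, hdF]; push_cast; ring
        have h := ha _ hF' hd'
        have heq : D + G.pt Q 1 - (F + G.pt Q 1) = D - F := by ring
        rwa [heq] at h
      have := le_csSup (G.SS_bddAbove D) hc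
      omega
  rw [rank_eq, rank_eq, if_pos hD, if_pos hDE]
  exact_mod_cast hkey

lemma rank_pt_zero (P : G.V) : G.rank (G.pt P 0) = 0 := by
  have hL : G.LinNonempty (G.pt P 0) :=
    G.linNonempty_of_effective (G.effective_pt P le_rfl)
  have hs : sSup (G.SS (G.pt P 0)) = 0 := by
    refine Nat.le_zero.mp (csSup_le ⟨0, G.SS_zero_mem hL⟩ fun a ha => ?_)
    have := G.SS_le ha
    rw [G.deg_pt] at this
    omega
  rw [rank_eq, if_pos hL, hs]
  rfl

lemma card_Hr (P : G.V) (N : ℕ) :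
    ((G.Hr P ∩ Set.Icc 1 N).ncard : ℤ) = G.rank (G.pt P (N : ℤ)) := by
  induction N with
  | zero =>
    have : G.Hr P ∩ Set.Icc 1 0 = ∅ := by
      ext m; simp only [Set.mem_inter_iff, Set.mem_Icc, Set.mem_empty_iff_false, iff_false]
      rintro ⟨-, h1, h2⟩; omega
    rw [this]
    simp [G.rank_pt_zero P]
  | succ N ih =>
    have hfin1 : (G.Hr P ∩ Set.Icc 1 N).Finite :=
      Set.Finite.inter_of_right (Set.finite_Icc 1 N) _
    have hfin2 : (G.Hr P ∩ {N + 1}).Finite :=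
      Set.Finite.inter_of_right (Set.finite_singleton _) _
    have hsplit : G.Hr P ∩ Set.Icc 1 (N + 1)
        = (G.Hr P ∩ Set.Icc 1 N) ∪ (G.Hr P ∩ {N + 1}) := by
      ext m
      simp only [Set.mem_inter_iff, Set.mem_union, Set.mem_Icc, Set.mem_singleton_iff]
      constructor
      · rintro ⟨hm, h1, h2⟩
        rcases Nat.lt_or_ge m (N + 1) with h | h
        · exact Or.inl ⟨hm, h1, by omega⟩
        · exact Or.inr ⟨hm, by omega⟩
      · rintro (⟨hm, h1, h2⟩ | ⟨hm, rfl⟩)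
        · exact ⟨hm, h1, by omega⟩
        · exact ⟨hm, by omega, le_rfl⟩
    have hdisj : Disjoint (G.Hr P ∩ Set.Icc 1 N) (G.Hr P ∩ {N + 1}) := by
      refine Set.disjoint_left.mpr fun m hm1 hm2 => ?_
      have h1 : m ≤ N := hm1.2.2
      have h2 : m = N + 1 := hm2.2
      omega
    rw [hsplit, Set.ncard_union_eq hdisj hfin1 hfin2]
    have hcast : ((N + 1 : ℕ) : ℤ) - 1 = (N : ℤ) := by push_cast; ring
    have hptsucc : G.pt P ((N + 1 : ℕ) : ℤ) = G.pt P (N : ℤ) + G.pt P 1 := by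
      rw [← G.pt_add]; push_cast; all_goals ring_nf
    have hLN : G.LinNonempty (G.pt P (N : ℤ)) :=
      G.linNonempty_of_effective (G.effective_pt P (by positivity))
    have hmono : G.rank (G.pt P (N : ℤ)) ≤ G.rank (G.pt P ((N + 1 : ℕ) : ℤ)) := by
      rw [hptsucc]
      exact G.rank_mono hLN (G.effective_pt P zero_le_one)
    have hstep : G.rank (G.pt P ((N + 1 : ℕ) : ℤ)) ≤ G.rank (G.pt P (N : ℤ)) + 1 := by
      rw [hptsucc]
      exact G.rank_step P hLN
    by_cases hmem : (N + 1) ∈ G.Hr P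
    · have hlt : G.rank (G.pt P (N : ℤ)) < G.rank (G.pt P ((N + 1 : ℕ) : ℤ)) := by
        have := hmem
        simp only [Hr, Set.mem_setOf_eq] at this
        rwa [hcast] at this
      have hone : G.Hr P ∩ {N + 1} = {N + 1} := by
        ext m
        simp only [Set.mem_inter_iff, Set.mem_singleton_iff]
        exact ⟨fun h => h.2, fun h => ⟨h ▸ hmem, h⟩⟩
      rw [hone, Set.ncard_singleton]
      omega
    · have hnlt : ¬ G.rank (G.pt P (N : ℤ)) < G.rank (G.pt P ((N + 1 : ℕ) : ℤ)) := by
        intro hlt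
        apply hmem
        simp only [Hr, Set.mem_setOf_eq]
        rwa [hcast]
      have hnone : G.Hr P ∩ {N + 1} = ∅ := by
        ext m
        simp only [Set.mem_inter_iff, Set.mem_singleton_iff, Set.mem_empty_iff_false, iff_false]
        rintro ⟨hm, rfl⟩
        exact hmem hm
      rw [hnone, Set.ncard_empty]
      omega

end Multigraph

/-- `|H_r(P) ∩ [1, nk]| ≥ k ⬝ |H_r(P) ∩ [1, n]|`. -/
theorem Hr_card_interval (G : Multigraph) (P : G.V) (n k : ℕ) :
    k * (G.Hr P ∩ Set.Icc 1 n).ncard ≤ (G.Hr P ∩ Set.Icc 1 (n * k)).ncard := by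
  have hLn : G.LinNonempty (G.pt P (n : ℤ)) :=
    G.linNonempty_of_effective (G.effective_pt P (by positivity))
  have key : ∀ j : ℕ, (j : ℤ) * G.rank (G.pt P (n : ℤ)) ≤ G.rank (G.pt P ((n * j : ℕ) : ℤ)) := by
    intro j
    induction j with
    | zero => simp [G.rank_pt_zero P]
    | succ j ih =>
      have hpt : G.pt P ((n * (j + 1) : ℕ) : ℤ)
          = G.pt P ((n * j : ℕ) : ℤ) + G.pt P (n : ℤ) := by
        rw [← G.pt_add]; push_cast; all_goals ring_nf
      have hLj : G.LinNonempty (G.pt P ((n * j : ℕ) : ℤ)) :=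
        G.linNonempty_of_effective (G.effective_pt P (by positivity))
      have hsup := G.rank_superadd hLj hLn
      rw [hpt, Nat.cast_add, Nat.cast_one]
      linarith
  have h1 := G.card_Hr P n
  have h2 := G.card_Hr P (n * k)
  have := key k
  rw [← h1, ← h2] at this
  exact_mod_cast this
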